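/- Let S and ρ be complex n×n matrices with S unitary (Sᴴ·S = I = S·Sᴴ) and trace(ρ) ≠ 0. Suppose S·ρ = s·ρ and ρ·Sᴴ = t·ρ for complex numbers s and t. Then s·t = 1 and |s| = 1; consequently t = conj(s). -/

import Mathlib

open Matrix

lemma trace_conjTranspose_mul_self_ne_zero {n : ℕ} {ρ : Matrix (Fin n) (Fin n) ℂ}
    (hρ : ρ ≠ 0) : (ρᴴ * ρ).trace ≠ 0 := by
  have h : (ρᴴ * ρ).trace = ((∑ j, ∑ i, Complex.normSq (ρ i j) : ℝ) : ℂ) := by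
    simp only [trace, diag, mul_apply, conjTranspose_apply, Complex.normSq_eq_conj_mul_self]
    push_cast
    simp [Complex.normSq_eq_conj_mul_self, RingHom.coe_coe]
  rw [h]
  norm_cast
  intro h0
  apply hρ
  ext i j
  have := (Finset.sum_eq_zero_iff_of_nonneg (fun j _ => Finset.sum_nonneg
    (fun i _ => Complex.normSq_nonneg (ρ i j)))).mp h0 j (Finset.mem_univ j)
  have := (Finset.sum_eq_zero_iff_of_nonneg
    (fun i _ => Complex.normSq_nonneg (ρ i j))).mp this i (Finset.mem_univ i)
  simpa using Complex.normSq_eq_zero.mp this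

/-- **Traceful eigenoperators of a strong symmetry lie in diagonal symmetry
sectors.** If `S` is unitary, `trace ρ ≠ 0`, `S·ρ = s • ρ`, and `ρ·Sᴴ = t • ρ`,
then `s·t = 1`, `|s| = 1`, and `t = conj s`. -/
theorem traceful_eigenoperator_diagonal_sector (n : ℕ)
    (S ρ : Matrix (Fin n) (Fin n) ℂ)
    (hU1 : Sᴴ * S = 1) (hU2 : S * Sᴴ = 1)
    (htr : ρ.trace ≠ 0) (s t : ℂ)
    (hs : S * ρ = s • ρ) (ht : ρ * Sᴴ = t • ρ) :
    s * t = 1 ∧ ‖s‖ = 1 ∧ t = (starRingEnd ℂ) s := by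
  have hρ : ρ ≠ 0 := by
    intro h; apply htr; rw [h, trace_zero]
  have hst : s * t = 1 := by
    have h1 : trace (S * ρ * Sᴴ) = trace ρ := by
      rw [trace_mul_cycle, hU1, one_mul]
    rw [hs, smul_mul_assoc, ht, smul_smul, trace_smul] at h1
    exact mul_right_cancel₀ htr (by rw [one_mul]; simpa using h1)
  have hss : (starRingEnd ℂ) s * s = 1 := by
    have h2 : (S * ρ)ᴴ * (S * ρ) = ρᴴ * ρ := by
      rw [conjTranspose_mul, mul_assoc, ← mul_assoc Sᴴ, hU1, one_mul]
    rw [hs, conjTranspose_smul, smul_mul_assoc, mul_smul_comm, smul_smul] at h2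
    have h3 := congrArg trace h2
    rw [trace_smul] at h3
    exact mul_right_cancel₀ (trace_conjTranspose_mul_self_ne_zero hρ)
      (by rw [one_mul]; simpa using h3)
  have hs0 : s ≠ 0 := by
    intro h; rw [h, mul_zero] at hss; exact one_ne_zero hss.symm
  refine ⟨hst, ?_, ?_⟩
  · have hns : (Complex.normSq s : ℂ) = 1 := by
      rw [Complex.normSq_eq_conj_mul_self, hss]
    have hns' : Complex.normSq s = 1 := by exact_mod_cast hns
    rw [← Complex.sq_norm] at hns'
    nlinarith [norm_nonneg s]
  · have h4 : s * t = s * (starRingEnd ℂ) s := by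
      rw [hst, mul_comm s, hss]
    exact mul_left_cancel₀ hs0 h4
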